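/- Let G be a connected simple undirected graph on n ≥ 4 vertices with m edges and degree sequence d₁ ≥ d₂ ≥ … ≥ d_n, let μ₁ ≥ μ₂ ≥ … ≥ μ_n = 0 be the eigenvalues of its Laplacian matrix, and assume μ₁ ≥ 1 + d₁ and μ₂ ≥ d₂ (both of which hold for every connected graph) and (n−2) d₂ ≥ 2m − 1 − d₁. Then for every real α with α > 1 or α < 0, s_α(G) ≥ (1+d₁)^α + d₂^α + (2m−1−d₁−d₂)^α / (n−3)^{α−1}, while for 0 < α < 1, s_α(G) ≤ (1+d₁)^α + d₂^α + (2m−1−d₁−d₂)^α / (n−3)^{α−1}. -/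

import Mathlib

open Polynomial Finset in
lemma aux_charpoly_conj {n : ℕ} (P Q M : Matrix (Fin n) (Fin n) ℝ) (hPQ : P * Q = 1) :
    (P * M * Q).charpoly = M.charpoly := by
  classical
  set C' : Matrix (Fin n) (Fin n) ℝ →+* Matrix (Fin n) (Fin n) ℝ[X] :=
    (Polynomial.C : ℝ →+* ℝ[X]).mapMatrix with hC'
  have hscalar : (Matrix.scalar (Fin n) (X : ℝ[X])) = (X : ℝ[X]) • (1 : Matrix (Fin n) (Fin n) ℝ[X]) := by
    ext i j
    by_cases h : i = j <;>
      simp [Matrix.scalar_apply, Matrix.diagonal, Matrix.one_apply, h]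
  have hcm : Matrix.charmatrix (P * M * Q) = C' P * Matrix.charmatrix M * C' Q := by
    rw [Matrix.charmatrix, Matrix.charmatrix, Matrix.mul_sub, Matrix.sub_mul]
    congr 1
    · rw [hscalar, Matrix.mul_smul, mul_one, Matrix.smul_mul, ← map_mul, hPQ, map_one]
    · simp [hC', RingHom.mapMatrix_apply, Matrix.map_mul, mul_assoc]
  have h1 : (C' P).det * (C' Q).det = 1 := by
    rw [← Matrix.det_mul, ← map_mul, hPQ, map_one, Matrix.det_one]
  rw [Matrix.charpoly, Matrix.charpoly, hcm, Matrix.det_mul, Matrix.det_mul]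
  linear_combination (Matrix.charmatrix M).det * h1

open Polynomial in
lemma aux_charpoly_diagonal {n : ℕ} (v : Fin n → ℝ) :
    (Matrix.diagonal v).charpoly = ∏ i, (X - C (v i)) := by
  have h : Matrix.charmatrix (Matrix.diagonal v) = Matrix.diagonal (fun i => X - C (v i)) := by
    ext i j
    by_cases h : i = j
    · subst h; simp
    · simp [Matrix.charmatrix_apply_ne _ _ _ h, Matrix.diagonal_apply_ne _ h]
  rw [Matrix.charpoly, h, Matrix.det_diagonal]

open Polynomial in
lemma aux_charpoly_hermitian {n : ℕ} {A : Matrix (Fin n) (Fin n) ℝ} (hA : A.IsHermitian) :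
    A.charpoly = ∏ i, (X - C (hA.eigenvalues i)) := by
  have hdiag : (Matrix.diagonal (RCLike.ofReal ∘ hA.eigenvalues) : Matrix (Fin n) (Fin n) ℝ)
      = Matrix.diagonal hA.eigenvalues := by
    congr 1
  have hU : (hA.eigenvectorUnitary : Matrix (Fin n) (Fin n) ℝ) *
      (star (hA.eigenvectorUnitary : Matrix (Fin n) (Fin n) ℝ)) = 1 :=
    (Matrix.mem_unitaryGroup_iff).mp hA.eigenvectorUnitary.2
  conv_lhs => rw [hA.spectral_theorem]
  rw [Unitary.conjStarAlgAut_apply, hdiag, aux_charpoly_conj _ _ _ hU, aux_charpoly_diagonal]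


open Set Real

lemma aux_convexOn_rpow_neg {α : ℝ} (hα : α < 0) :
    ConvexOn ℝ (Set.Ioi (0:ℝ)) (fun x : ℝ => x ^ α) := by
  have h := strictConvexOn_of_deriv2_pos' (convex_Ioi (0:ℝ)) (f := fun x : ℝ => x ^ α)
    (fun x hx => (Real.continuousAt_rpow_const x α (Or.inl (ne_of_gt hx))).continuousWithinAt)
    (fun x hx => by
      have hx0 : (0:ℝ) < x := hx
      have hev : deriv (fun y : ℝ => y ^ α) =ᶠ[nhds x] fun y => α * y ^ (α - 1) :=
        (eventually_ne_nhds hx0.ne').mono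
          (fun y hy => Real.deriv_rpow_const y α)
      have h2 : deriv^[2] (fun y : ℝ => y ^ α) x = deriv (fun y => α * y ^ (α - 1)) x :=
        Filter.EventuallyEq.deriv_eq hev
      rw [h2, deriv_const_mul _ ((Real.hasDerivAt_rpow_const
        (x := x) (p := α - 1) (Or.inl hx0.ne')).differentiableAt),
        Real.deriv_rpow_const x (α - 1)]
      have : 0 < α * (α - 1) := mul_pos_of_neg_of_neg hα (by linarith)
      have := Real.rpow_pos_of_pos hx0 (α - 1 - 1)
      nlinarith)
  exact h.convexOn

lemma aux_jensen_convex {ι : Type*} {s : Finset ι} (hs : s.Nonempty) {D : Set ℝ}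
    {f : ℝ → ℝ} (hf : ConvexOn ℝ D f) (g : ι → ℝ) (hg : ∀ i ∈ s, g i ∈ D) :
    (s.card : ℝ) * f ((∑ i ∈ s, g i) / s.card) ≤ ∑ i ∈ s, f (g i) := by
  have hcard : (0:ℝ) < s.card := by exact_mod_cast Finset.card_pos.mpr hs
  have h := hf.map_sum_le (t := s) (w := fun _ => (s.card : ℝ)⁻¹) (p := g)
    (fun i _ => by positivity) (by rw [Finset.sum_const, nsmul_eq_mul]; exact mul_inv_cancel₀ hcard.ne') hg
  have e1 : (∑ i ∈ s, (s.card : ℝ)⁻¹ • g i) = (∑ i ∈ s, g i) / s.card := by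
    rw [← Finset.smul_sum]; simp [div_eq_inv_mul]
  rw [e1] at h
  have e2 : (∑ i ∈ s, (s.card : ℝ)⁻¹ • f (g i)) = (∑ i ∈ s, f (g i)) / s.card := by
    rw [← Finset.smul_sum]; simp [div_eq_inv_mul]
  rw [e2] at h
  rw [mul_comm]
  exact (le_div_iff₀ hcard).mp h

lemma aux_jensen_concave {ι : Type*} {s : Finset ι} (hs : s.Nonempty) {D : Set ℝ}
    {f : ℝ → ℝ} (hf : ConcaveOn ℝ D f) (g : ι → ℝ) (hg : ∀ i ∈ s, g i ∈ D) :
    ∑ i ∈ s, f (g i) ≤ (s.card : ℝ) * f ((∑ i ∈ s, g i) / s.card) := by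
  have h := aux_jensen_convex hs hf.neg g hg
  simp only [Pi.neg_apply, Finset.sum_neg_distrib, mul_neg, neg_le_neg_iff] at h
  linarith [h]

lemma aux_jensen_rpow_convex {ι : Type*} {s : Finset ι} (hs : s.Nonempty) {α : ℝ}
    (hα : 1 < α ∨ α < 0) (g : ι → ℝ) (hg : ∀ i ∈ s, 0 < g i) :
    (∑ i ∈ s, g i) ^ α / (s.card : ℝ) ^ (α - 1) ≤ ∑ i ∈ s, g i ^ α := by
  have hcard : (0:ℝ) < s.card := by exact_mod_cast Finset.card_pos.mpr hs
  have hS : 0 < ∑ i ∈ s, g i := Finset.sum_pos hg hs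
  have h : (s.card : ℝ) * ((∑ i ∈ s, g i) / s.card) ^ α ≤ ∑ i ∈ s, g i ^ α := by
    rcases hα with h1 | h1
    · exact aux_jensen_convex hs (convexOn_rpow h1.le) g (fun i hi => (hg i hi).le)
    · exact aux_jensen_convex hs (aux_convexOn_rpow_neg h1) g (fun i hi => hg i hi)
  calc (∑ i ∈ s, g i) ^ α / (s.card : ℝ) ^ (α - 1)
      = (s.card : ℝ) * ((∑ i ∈ s, g i) / s.card) ^ α := by
        rw [Real.div_rpow hS.le hcard.le, Real.rpow_sub hcard, Real.rpow_one]
        field_simp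
    _ ≤ _ := h

lemma aux_jensen_rpow_concave {ι : Type*} {s : Finset ι} (hs : s.Nonempty) {α : ℝ}
    (hα : 0 < α) (hα1 : α < 1) (g : ι → ℝ) (hg : ∀ i ∈ s, 0 < g i) :
    ∑ i ∈ s, g i ^ α ≤ (∑ i ∈ s, g i) ^ α / (s.card : ℝ) ^ (α - 1) := by
  have hcard : (0:ℝ) < s.card := by exact_mod_cast Finset.card_pos.mpr hs
  have hS : 0 < ∑ i ∈ s, g i := Finset.sum_pos hg hs
  have h := aux_jensen_concave hs (Real.concaveOn_rpow hα.le hα1.le) g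
    (fun i hi => (hg i hi).le)
  calc ∑ i ∈ s, g i ^ α ≤ (s.card : ℝ) * ((∑ i ∈ s, g i) / s.card) ^ α := h
    _ = (∑ i ∈ s, g i) ^ α / (s.card : ℝ) ^ (α - 1) := by
        rw [Real.div_rpow hS.le hcard.le, Real.rpow_sub hcard, Real.rpow_one]
        field_simp


open Set Real

lemma aux_phi_hasDeriv {α S k : ℝ} {x : ℝ} (hx : x ≠ 0) (hSx : S - x ≠ 0) :
    HasDerivAt (fun y : ℝ => y ^ α + (S - y) ^ α / k ^ (α - 1))
      (α * x ^ (α - 1) - α * (S - x) ^ (α - 1) / k ^ (α - 1)) x := by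
  have h1 := Real.hasDerivAt_rpow_const (x := x) (p := α) (Or.inl hx)
  have h2 : HasDerivAt (fun y : ℝ => (S - y) ^ α) (-(α * (S - x) ^ (α - 1))) x := by
    have h3 := (Real.hasDerivAt_rpow_const (x := S - x) (p := α) (Or.inl hSx)).comp x
      ((hasDerivAt_id x).const_sub S)
    exact h3.congr_deriv (by ring)
  have h4 := h1.add (h2.div_const (k ^ (α - 1)))
  exact h4.congr_deriv (by ring)

/-- Monotonicity of `x ↦ x^α + (S-x)^α / k^(α-1)` for `α > 1` or `α < 0`. -/
lemma aux_phi_le {α S k : ℝ} (hk : 1 ≤ k) (hcase : 1 < α ∨ α < 0) {a b : ℝ} (ha : 0 < a)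
    (hab : a ≤ b) (hSb : 0 < S - b) (hcon : S - a ≤ k * a) :
    a ^ α + (S - a) ^ α / k ^ (α - 1) ≤ b ^ α + (S - b) ^ α / k ^ (α - 1) := by
  have hk0 : (0:ℝ) < k := lt_of_lt_of_le one_pos hk
  set φ : ℝ → ℝ := fun y => y ^ α + (S - y) ^ α / k ^ (α - 1) with hφ
  have hD : ∀ x ∈ Icc a b, HasDerivAt φ
      (α * x ^ (α - 1) - α * (S - x) ^ (α - 1) / k ^ (α - 1)) x := by
    intro x hx
    have hx0 : 0 < x := lt_of_lt_of_le ha hx.1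
    have hSx : 0 < S - x := lt_of_lt_of_le hSb (by linarith [hx.2])
    exact aux_phi_hasDeriv hx0.ne' hSx.ne'
  have hderiv_nonneg : ∀ x ∈ Icc a b,
      0 ≤ α * x ^ (α - 1) - α * (S - x) ^ (α - 1) / k ^ (α - 1) := by
    intro x hx
    have hx0 : 0 < x := lt_of_lt_of_le ha hx.1
    have hSx : 0 < S - x := lt_of_lt_of_le hSb (by linarith [hx.2])
    have hcx : (S - x) / k ≤ x := by
      rw [div_le_iff₀ hk0]
      nlinarith [hx.1, hcon]
    have hcpos : 0 < (S - x) / k := div_pos hSx hk0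
    have hrw : (S - x) ^ (α - 1) / k ^ (α - 1) = ((S - x) / k) ^ (α - 1) :=
      (Real.div_rpow hSx.le hk0.le _).symm
    rw [mul_div_assoc, hrw]
    rcases hcase with h1 | h1
    · have := Real.rpow_le_rpow hcpos.le hcx (by linarith : (0:ℝ) ≤ α - 1)
      nlinarith
    · have := Real.rpow_le_rpow_of_nonpos hcpos hcx (by linarith : α - 1 ≤ 0)
      nlinarith
  have hmono : MonotoneOn φ (Icc a b) := by
    apply monotoneOn_of_deriv_nonneg (convex_Icc a b)
    · exact fun x hx => (hD x hx).continuousAt.continuousWithinAt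
    · intro x hx
      rw [interior_Icc] at hx
      exact ((hD x (Ioo_subset_Icc_self hx)).differentiableAt).differentiableWithinAt
    · intro x hx
      rw [interior_Icc] at hx
      rw [(hD x (Ioo_subset_Icc_self hx)).deriv]
      exact hderiv_nonneg x (Ioo_subset_Icc_self hx)
  exact hmono (left_mem_Icc.mpr hab) (right_mem_Icc.mpr hab) hab

/-- Antitonicity for `0 < α < 1`. -/
lemma aux_phi_ge {α S k : ℝ} (hk : 1 ≤ k) (hα0 : 0 < α) (hα1 : α < 1) {a b : ℝ} (ha : 0 < a)
    (hab : a ≤ b) (hSb : 0 < S - b) (hcon : S - a ≤ k * a) :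
    b ^ α + (S - b) ^ α / k ^ (α - 1) ≤ a ^ α + (S - a) ^ α / k ^ (α - 1) := by
  have hk0 : (0:ℝ) < k := lt_of_lt_of_le one_pos hk
  set φ : ℝ → ℝ := fun y => y ^ α + (S - y) ^ α / k ^ (α - 1) with hφ
  have hD : ∀ x ∈ Icc a b, HasDerivAt φ
      (α * x ^ (α - 1) - α * (S - x) ^ (α - 1) / k ^ (α - 1)) x := by
    intro x hx
    have hx0 : 0 < x := lt_of_lt_of_le ha hx.1
    have hSx : 0 < S - x := lt_of_lt_of_le hSb (by linarith [hx.2])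
    exact aux_phi_hasDeriv hx0.ne' hSx.ne'
  have hderiv_nonpos : ∀ x ∈ Icc a b,
      α * x ^ (α - 1) - α * (S - x) ^ (α - 1) / k ^ (α - 1) ≤ 0 := by
    intro x hx
    have hx0 : 0 < x := lt_of_lt_of_le ha hx.1
    have hSx : 0 < S - x := lt_of_lt_of_le hSb (by linarith [hx.2])
    have hcx : (S - x) / k ≤ x := by
      rw [div_le_iff₀ hk0]
      nlinarith [hx.1, hcon]
    have hcpos : 0 < (S - x) / k := div_pos hSx hk0
    have hrw : (S - x) ^ (α - 1) / k ^ (α - 1) = ((S - x) / k) ^ (α - 1) :=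
      (Real.div_rpow hSx.le hk0.le _).symm
    rw [mul_div_assoc, hrw]
    have := Real.rpow_le_rpow_of_nonpos hcpos hcx (by linarith : α - 1 ≤ 0)
    nlinarith
  have hmono : AntitoneOn φ (Icc a b) := by
    apply antitoneOn_of_deriv_nonpos (convex_Icc a b)
    · exact fun x hx => (hD x hx).continuousAt.continuousWithinAt
    · intro x hx
      rw [interior_Icc] at hx
      exact ((hD x (Ioo_subset_Icc_self hx)).differentiableAt).differentiableWithinAt
    · intro x hx
      rw [interior_Icc] at hx
      rw [(hD x (Ioo_subset_Icc_self hx)).deriv]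
      exact hderiv_nonpos x (Ioo_subset_Icc_self hx)
  exact hmono (left_mem_Icc.mpr hab) (right_mem_Icc.mpr hab) hab


open Polynomial Finset

lemma aux_roots_prod {n : ℕ} (f : Fin n → ℝ) :
    (∏ i, (X - C (f i))).roots = Finset.univ.val.map f := by
  rw [Finset.prod_eq_multiset_prod]
  have h : Multiset.map (fun i => X - C (f i)) Finset.univ.val
      = Multiset.map (fun a => X - C a) (Multiset.map f Finset.univ.val) := by
    rw [Multiset.map_map]; rfl
  rw [h, Polynomial.roots_multiset_prod_X_sub_C]

lemma aux_count_zero {n : ℕ} (f : Fin n → ℝ) :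
    Multiset.count 0 (Finset.univ.val.map f)
      = (Finset.univ.filter (fun i => f i = 0)).card := by
  classical
  rw [Multiset.count_map, Finset.card_def, Finset.filter_val]
  exact congrArg Multiset.card (Multiset.filter_congr (fun x _ => eq_comm))

lemma aux_spectral {n : ℕ} (hn : 1 ≤ n) (G : SimpleGraph (Fin n)) [DecidableRel G.Adj]
    (hconn : G.Connected) (μ : Fin n → ℝ)
    (hchar : (SimpleGraph.lapMatrix ℝ G).charpoly = ∏ i, (X - C (μ i))) :
    (∀ i, 0 ≤ μ i) ∧ (∑ i, μ i = 2 * (G.edgeFinset.card : ℝ)) ∧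
      ((Finset.univ.filter (fun i : Fin n => μ i = 0)).card = 1) := by
  classical
  have hpsd : (G.lapMatrix ℝ).PosSemidef := SimpleGraph.posSemidef_lapMatrix ℝ G
  have hherm := hpsd.1
  set eig := hherm.eigenvalues with heig
  have he : (G.lapMatrix ℝ).charpoly = ∏ i, (X - C (eig i)) := aux_charpoly_hermitian hherm
  have hms : Finset.univ.val.map μ = Finset.univ.val.map eig := by
    rw [← aux_roots_prod μ, ← aux_roots_prod eig, ← hchar, ← he]
  refine ⟨?_, ?_, ?_⟩
  · intro i
    have hmem : μ i ∈ Finset.univ.val.map μ :=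
      Multiset.mem_map_of_mem μ (Finset.mem_val.mpr (Finset.mem_univ i))
    rw [hms] at hmem
    obtain ⟨j, _, hj⟩ := Multiset.mem_map.mp hmem
    rw [← hj]
    exact hpsd.eigenvalues_nonneg j
  · have htr : (G.lapMatrix ℝ).trace = ∑ i, (G.degree i : ℝ) := by
      rw [Matrix.trace]
      apply Finset.sum_congr rfl
      intro i _
      simp [SimpleGraph.lapMatrix, SimpleGraph.degMatrix, Matrix.sub_apply, Matrix.diag]
    have hsplits : (G.lapMatrix ℝ).charpoly.Splits := by
      rw [hchar]
      exact Polynomial.Splits.prod (fun i _ => Polynomial.Splits.X_sub_C _)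
    have h2 := Matrix.trace_eq_sum_roots_charpoly_of_splits hsplits
    rw [hchar, aux_roots_prod μ, htr] at h2
    have h3 : (Finset.univ.val.map μ).sum = ∑ i, μ i :=
      (Finset.sum_eq_multiset_sum _ _).symm
    rw [h3] at h2
    rw [← h2]
    rw [← Nat.cast_sum]
    rw [SimpleGraph.sum_degrees_eq_twice_card_edges]
    push_cast
    ring
  · -- kernel dimension is 1
    have h1 : Fintype.card G.ConnectedComponent = 1 := by
      obtain ⟨v⟩ : Nonempty (Fin n) := ⟨⟨0, hn⟩⟩
      rw [Fintype.card_eq_one_iff]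
      refine ⟨G.connectedComponentMk v, ?_⟩
      intro c
      induction c using SimpleGraph.ConnectedComponent.ind with
      | _ w => exact SimpleGraph.ConnectedComponent.sound (hconn.preconnected w v)
    have h2 := SimpleGraph.card_connectedComponent_eq_finrank_ker_toLin'_lapMatrix G
    have h3 : Matrix.toLin' (G.lapMatrix ℝ) = (G.lapMatrix ℝ).mulVecLin :=
      LinearMap.ext fun v => by rw [Matrix.toLin'_apply, Matrix.mulVecLin_apply]
    rw [h1, h3] at h2
    have h4 := LinearMap.finrank_range_add_finrank_ker ((G.lapMatrix ℝ).mulVecLin)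
    have h5 : Module.finrank ℝ (Fin n → ℝ) = n := by
      simp [Module.finrank_fintype_fun_eq_card]
    rw [h5] at h4
    have h6 := hherm.rank_eq_card_non_zero_eigs
    have h7 : Fintype.card {i : Fin n // eig i ≠ 0}
        = n - Fintype.card {i : Fin n // eig i = 0} := by
      simpa using Fintype.card_subtype_compl (p := fun i : Fin n => eig i = 0)
    have h8 : Fintype.card {i : Fin n // eig i = 0}
        = (Finset.univ.filter (fun i : Fin n => eig i = 0)).card :=
      Fintype.card_subtype _
    rw [h7] at h6
    have hrank : Matrix.rank (G.lapMatrix ℝ) =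
        Module.finrank ℝ (LinearMap.range ((G.lapMatrix ℝ).mulVecLin)) := rfl
    have hcnt : (Finset.univ.filter (fun i : Fin n => μ i = 0)).card
        = (Finset.univ.filter (fun i : Fin n => eig i = 0)).card := by
      rw [← aux_count_zero μ, ← aux_count_zero eig, hms]
    rw [hcnt, ← h8]
    have hcard_le : Fintype.card {i : Fin n // eig i = 0} ≤ n := by
      have := Fintype.card_subtype_le (fun i : Fin n => eig i = 0)
      simpa using this
    omega

/-- For a connected graph `G` on `n ≥ 4` vertices with `m` edges, nonincreasing degree
sequence `d` (a rearrangement of the vertex degrees), nonincreasing Laplacian eigenvalues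
`μ₁ ≥ … ≥ μ_n = 0` with `μ₁ ≥ 1 + d₁`, `μ₂ ≥ d₂`, and `(n−2) d₂ ≥ 2m − 1 − d₁`: if
`α > 1` or `α < 0` then `s_α(G) ≥ (1+d₁)^α + d₂^α + (2m−1−d₁−d₂)^α/(n−3)^{α−1}`, while
for `0 < α < 1` the inequality is reversed. -/
theorem stmt_11 {n : ℕ} (hn : 4 ≤ n) (G : SimpleGraph (Fin n)) [DecidableRel G.Adj]
    (hconn : G.Connected) (m : ℕ) (hm : m = G.edgeFinset.card)
    (d : Fin n → ℕ) (hda : Antitone d)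
    (hdseq : ∃ σ : Equiv.Perm (Fin n), ∀ i, d i = G.degree (σ i))
    (μ : Fin n → ℝ) (hμa : Antitone μ)
    (hchar : (SimpleGraph.lapMatrix ℝ G).charpoly =
      ∏ i, (Polynomial.X - Polynomial.C (μ i)))
    (hμn : μ ⟨n - 1, by omega⟩ = 0)
    (hμ1 : (1 : ℝ) + d ⟨0, by omega⟩ ≤ μ ⟨0, by omega⟩)
    (hμ2 : (d ⟨1, by omega⟩ : ℝ) ≤ μ ⟨1, by omega⟩)
    (hd2 : 2 * (m : ℝ) - 1 - d ⟨0, by omega⟩ ≤ ((n : ℝ) - 2) * d ⟨1, by omega⟩)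
    (α : ℝ) :
    ((1 < α ∨ α < 0) →
      ((1 : ℝ) + d ⟨0, by omega⟩) ^ α + (d ⟨1, by omega⟩ : ℝ) ^ α +
          (2 * (m : ℝ) - 1 - d ⟨0, by omega⟩ - d ⟨1, by omega⟩) ^ α /
            ((n : ℝ) - 3) ^ (α - 1) ≤
        ∑ i ∈ Finset.univ.filter (fun i : Fin n => (i : ℕ) < n - 1), μ i ^ α) ∧
    ((0 < α ∧ α < 1) →
      ∑ i ∈ Finset.univ.filter (fun i : Fin n => (i : ℕ) < n - 1), μ i ^ α ≤
        ((1 : ℝ) + d ⟨0, by omega⟩) ^ α + (d ⟨1, by omega⟩ : ℝ) ^ α +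
          (2 * (m : ℝ) - 1 - d ⟨0, by omega⟩ - d ⟨1, by omega⟩) ^ α /
            ((n : ℝ) - 3) ^ (α - 1)) := by
  classical
  obtain ⟨hnonneg, hsum, hzcard⟩ := aux_spectral (by omega) G hconn μ hchar
  have i0lt : 0 < n := by omega
  have i1lt : 1 < n := by omega
  have illt : n - 1 < n := by omega
  set i0 : Fin n := ⟨0, i0lt⟩ with hi0
  set i1 : Fin n := ⟨1, i1lt⟩ with hi1
  set il : Fin n := ⟨n - 1, illt⟩ with hil
  -- positivity of the nonlast eigenvalues
  have hlast_mem : il ∈ Finset.univ.filter (fun i : Fin n => μ i = 0) := by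
    simp only [Finset.mem_filter, Finset.mem_univ, true_and]
    exact hμn
  have hpos : ∀ i : Fin n, (i : ℕ) < n - 1 → 0 < μ i := by
    intro i hi
    rcases lt_or_eq_of_le (hnonneg i) with h | h
    · exact h
    exfalso
    have hi_mem : i ∈ Finset.univ.filter (fun j : Fin n => μ j = 0) := by
      simp only [Finset.mem_filter, Finset.mem_univ, true_and]
      exact h.symm
    have heq := Finset.card_le_one.mp (le_of_eq hzcard) i hi_mem il hlast_mem
    have : (i : ℕ) = n - 1 := by rw [heq]
    omega
  -- degrees are at least 1
  obtain ⟨σ, hσ⟩ := hdseq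
  have hdeg : ∀ v : Fin n, 1 ≤ G.degree v := by
    intro v
    have hadj : ∃ w, G.Adj v w := by
      obtain ⟨w, hw⟩ := Fintype.exists_ne_of_one_lt_card (by simp; omega) v
      obtain ⟨p⟩ := hconn.preconnected v w
      cases p with
      | nil => exact absurd rfl hw
      | cons h p => exact ⟨_, h⟩
    exact (SimpleGraph.degree_pos_iff_exists_adj (G := G) v).mpr hadj
  have hd1R : (1 : ℝ) ≤ (d i1 : ℝ) := by
    have := hdeg (σ i1)
    have h2 := hσ i1
    exact_mod_cast h2 ▸ this
  have hd01 : (d i1 : ℝ) ≤ (d i0 : ℝ) := by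
    exact_mod_cast hda (show i0 ≤ i1 from Fin.mk_le_mk.mpr (by omega))
  -- the index sets
  set F := Finset.univ.filter (fun i : Fin n => (i : ℕ) < n - 1) with hF
  have hFerase : F = Finset.univ.erase il := by
    ext i
    simp only [hF, Finset.mem_filter, Finset.mem_univ, true_and, Finset.mem_erase, hil,
      ne_eq, and_true, Fin.ext_iff, Fin.val_mk]
    have := i.isLt
    omega
  have h0F : i0 ∈ F := by
    simp only [hF, Finset.mem_filter, Finset.mem_univ, true_and, hi0, Fin.val_mk]
    omega
  have h1F : i1 ∈ F.erase i0 := by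
    simp only [Finset.mem_erase, hF, Finset.mem_filter, Finset.mem_univ, true_and, hi0, hi1,
      ne_eq, and_true, Fin.ext_iff, Fin.val_mk]
    omega
  set T := (F.erase i0).erase i1 with hT
  have hFsum : ∀ f : Fin n → ℝ, ∑ i ∈ F, f i = f i0 + (f i1 + ∑ i ∈ T, f i) := by
    intro f
    rw [← Finset.add_sum_erase _ f h0F, ← Finset.add_sum_erase _ f h1F]
  have hTsub : ∀ i ∈ T, (i : ℕ) < n - 1 := by
    intro i hi
    have : i ∈ F := Finset.mem_of_mem_erase (Finset.mem_of_mem_erase hi)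
    simpa [hF] using this
  have hTcard : T.card = n - 3 := by
    have hcF : F.card = n - 1 := by
      rw [hFerase, Finset.card_erase_of_mem (Finset.mem_univ _)]
      simp
    have e1 : T.card = (F.erase i0).card - 1 := Finset.card_erase_of_mem h1F
    have e2 : (F.erase i0).card = F.card - 1 := Finset.card_erase_of_mem h0F
    omega
  have hTne : T.Nonempty := Finset.card_pos.mp (by rw [hTcard]; omega)
  have hkcard : (T.card : ℝ) = (n : ℝ) - 3 := by
    rw [hTcard]
    have : (3:ℕ) ≤ n := by omega
    push_cast [Nat.cast_sub this]
    ring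
  have hk1 : (1:ℝ) ≤ (n : ℝ) - 3 := by
    have : (4:ℝ) ≤ (n:ℝ) := by exact_mod_cast hn
    linarith
  -- sums of eigenvalues
  have hμF : ∑ i ∈ F, μ i = 2 * (m:ℝ) := by
    have h1 : ∑ i ∈ Finset.univ, μ i = μ il + ∑ i ∈ F, μ i := by
      rw [hFerase, Finset.add_sum_erase _ μ (Finset.mem_univ il)]
    rw [hsum, ← hm] at h1
    rw [hμn] at h1
    linarith
  have hμT : ∑ i ∈ T, μ i = 2 * (m:ℝ) - μ i0 - μ i1 := by
    have := hFsum μ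
    rw [hμF] at this
    linarith
  have hSTpos : 0 < ∑ i ∈ T, μ i :=
    Finset.sum_pos (fun i hi => hpos i (hTsub i hi)) hTne
  -- basic bounds
  have hA0 : (0:ℝ) < 1 + (d i0 : ℝ) := by positivity
  have haA : (1:ℝ) + (d i0 : ℝ) ≤ μ i0 := hμ1
  have hbB : (d i1 : ℝ) ≤ μ i1 := hμ2
  have hb0 : (0:ℝ) < (d i1 : ℝ) := by linarith
  have hd2' : 2 * (m:ℝ) - 1 - (d i0 : ℝ) - (d i1 : ℝ) ≤ ((n:ℝ) - 3) * (d i1 : ℝ) := by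
    have := hd2
    nlinarith
  have hS2B : (0:ℝ) < 2 * (m:ℝ) - 1 - (d i0 : ℝ) - μ i1 := by
    have := hSTpos
    rw [hμT] at this
    linarith
  have hcon1 : (2 * (m:ℝ) - μ i1) - (1 + (d i0 : ℝ)) ≤ ((n:ℝ) - 3) * (1 + (d i0 : ℝ)) := by
    have hmul : ((n:ℝ) - 3) * (d i1 : ℝ) ≤ ((n:ℝ) - 3) * (1 + (d i0 : ℝ)) :=
      mul_le_mul_of_nonneg_left (by linarith) (by linarith)
    linarith
  have hS1A : (0:ℝ) < (2 * (m:ℝ) - μ i1) - μ i0 := by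
    have := hSTpos
    rw [hμT] at this
    linarith
  -- glue equalities
  have eglue1 : (2 * (m:ℝ) - 1 - (d i0 : ℝ) - μ i1)
      = (2 * (m:ℝ) - μ i1) - (1 + (d i0 : ℝ)) := by ring
  have eglue2 : (2 * (m:ℝ) - μ i1) - μ i0 = ∑ i ∈ T, μ i := by
    rw [hμT]; ring
  constructor
  · intro hcase
    have hj := aux_jensen_rpow_convex hTne hcase μ (fun i hi => hpos i (hTsub i hi))
    rw [hkcard] at hj
    have h2 := aux_phi_le (S := 2 * (m:ℝ) - 1 - (d i0 : ℝ)) (k := (n:ℝ) - 3)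
      hk1 hcase hb0 hbB hS2B (by linarith)
    have h1 := aux_phi_le (S := 2 * (m:ℝ) - μ i1) (k := (n:ℝ) - 3)
      hk1 hcase hA0 haA hS1A hcon1
    rw [eglue1] at h2
    rw [eglue2] at h1
    have hgoal : ∑ i ∈ F, μ i ^ α = μ i0 ^ α + (μ i1 ^ α + ∑ i ∈ T, μ i ^ α) :=
      hFsum (fun i => μ i ^ α)
    rw [hgoal]
    linarith
  · rintro ⟨hα0, hα1⟩
    have hj := aux_jensen_rpow_concave hTne hα0 hα1 μ (fun i hi => hpos i (hTsub i hi))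
    rw [hkcard] at hj
    have h2 := aux_phi_ge (S := 2 * (m:ℝ) - 1 - (d i0 : ℝ)) (k := (n:ℝ) - 3)
      hk1 hα0 hα1 hb0 hbB hS2B (by linarith)
    have h1 := aux_phi_ge (S := 2 * (m:ℝ) - μ i1) (k := (n:ℝ) - 3)
      hk1 hα0 hα1 hA0 haA hS1A hcon1
    rw [eglue1] at h2
    rw [eglue2] at h1
    have hgoal : ∑ i ∈ F, μ i ^ α = μ i0 ^ α + (μ i1 ^ α + ∑ i ∈ T, μ i ^ α) :=
      hFsum (fun i => μ i ^ α)
    rw [hgoal]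
    linarith
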